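/- For each N ≥ 2, let P = {(x,0) : x ∈ ℝ} and Q = {(x, x/√(N−1)) : x ∈ ℝ} be lines in ℝ², and let T = (1/2)I + (1/2)R_{γA}R_{γB} be the Douglas–Rachford operator with A = N_Q and B = N_P the normal cone operators and any γ > 0. Then T equals the linear map √((N−1)/N) · (rotation by angle θ), where θ = arcsin(1/√N). -/

import Mathlib

/-- The planar rotation by angle `θ` on `EuclideanSpace ℝ (Fin 2)`. -/
noncomputable def rot2 (θ : ℝ) (x : EuclideanSpace ℝ (Fin 2)) : EuclideanSpace ℝ (Fin 2) :=
  (WithLp.equiv 2 (Fin 2 → ℝ)).symm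
    ![Real.cos θ * x 0 - Real.sin θ * x 1, Real.sin θ * x 0 + Real.cos θ * x 1]

/-- with `P = {(x,0)}` and `Q = {(x, x/√(N−1))}` two lines in `ℝ²`,
the Douglas–Rachford operator `T = (1/2)I + (1/2) R_{γA} R_{γB}` for `A = N_Q`, `B = N_P`
(whose resolvents are the orthogonal projections onto `Q` and `P`, for any `γ > 0`)
equals `√((N−1)/N)` times the rotation by `θ = arcsin (1/√N)`. -/
theorem stmt2 (N : ℕ) (hN : 2 ≤ N) (γ : ℝ) (hγ : 0 < γ)
    (P Q : Submodule ℝ (EuclideanSpace ℝ (Fin 2)))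
    (hP : P = Submodule.span ℝ {(WithLp.equiv 2 (Fin 2 → ℝ)).symm ![1, 0]})
    (hQ : Q = Submodule.span ℝ
      {(WithLp.equiv 2 (Fin 2 → ℝ)).symm ![1, 1 / Real.sqrt ((N : ℝ) - 1)]})
    (RA RB T : EuclideanSpace ℝ (Fin 2) → EuclideanSpace ℝ (Fin 2))
    (hRA : ∀ x, RA x = (2 : ℝ) • (Q.orthogonalProjectionOnto x : EuclideanSpace ℝ (Fin 2)) - x)
    (hRB : ∀ x, RB x = (2 : ℝ) • (P.orthogonalProjectionOnto x : EuclideanSpace ℝ (Fin 2)) - x)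
    (hT : ∀ x, T x = (1/2 : ℝ) • x + (1/2 : ℝ) • RA (RB x)) :
    ∀ x, T x = Real.sqrt (((N : ℝ) - 1) / N) • rot2 (Real.arcsin (1 / Real.sqrt N)) x := by
  intro x
  have hn : (2:ℝ) ≤ (N:ℝ) := by exact_mod_cast hN
  have hs2 : Real.sqrt ((N:ℝ) - 1) ^ 2 = (N:ℝ) - 1 := Real.sq_sqrt (by linarith)
  have hspos : 0 < Real.sqrt ((N:ℝ) - 1) := Real.sqrt_pos.2 (by linarith)
  have hr2 : Real.sqrt (N:ℝ) ^ 2 = (N:ℝ) := Real.sq_sqrt (by linarith)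
  have hrpos : 0 < Real.sqrt (N:ℝ) := Real.sqrt_pos.2 (by linarith)
  have hinv : 0 < 1 / Real.sqrt (N:ℝ) := by positivity
  have hsin : Real.sin (Real.arcsin (1 / Real.sqrt (N:ℝ))) = 1 / Real.sqrt (N:ℝ) := by
    refine Real.sin_arcsin (by linarith) ?_
    rw [div_le_one hrpos]; nlinarith
  have hcos : Real.cos (Real.arcsin (1 / Real.sqrt (N:ℝ)))
      = Real.sqrt ((N:ℝ) - 1) / Real.sqrt (N:ℝ) := by
    rw [Real.cos_arcsin, div_pow, one_pow, hr2,
      show 1 - 1/(N:ℝ) = ((N:ℝ)-1)/(N:ℝ) by field_simp,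
      Real.sqrt_div (by linarith : (0:ℝ) ≤ (N:ℝ) - 1)]
  have hsq : Real.sqrt (((N:ℝ)-1)/(N:ℝ)) = Real.sqrt ((N:ℝ)-1) / Real.sqrt (N:ℝ) :=
    Real.sqrt_div (by linarith : (0:ℝ) ≤ (N:ℝ) - 1) _
  rw [hT, hRA, hRB, hP, hQ, Submodule.coe_orthogonalProjectionOnto_apply, Submodule.coe_orthogonalProjectionOnto_apply,
    Submodule.starProjection_singleton, Submodule.starProjection_singleton,
    hsq]
  have hnP : (‖(WithLp.equiv 2 (Fin 2 → ℝ)).symm ![1, (0:ℝ)]‖:ℝ)^2 = 1 := by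
    rw [← real_inner_self_eq_norm_sq]
    simp [PiLp.inner_apply, Fin.sum_univ_two, -inner_self_eq_norm_sq_to_K]
  have hnQ : (‖(WithLp.equiv 2 (Fin 2 → ℝ)).symm
      ![1, 1/Real.sqrt ((N:ℝ)-1)]‖:ℝ)^2 = 1 + 1/((N:ℝ)-1) := by
    rw [← real_inner_self_eq_norm_sq]
    simp [PiLp.inner_apply, Fin.sum_univ_two, -inner_self_eq_norm_sq_to_K]
    rw [← mul_inv, Real.mul_self_sqrt (by linarith : (0:ℝ) ≤ (N:ℝ)-1)]
  rw [hnP, hnQ]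
  ext i
  fin_cases i <;>
  · simp only [rot2, PiLp.add_apply, PiLp.smul_apply, PiLp.sub_apply, smul_eq_mul,
      WithLp.equiv_symm_apply, PiLp.toLp_apply, Matrix.cons_val_zero, Matrix.cons_val_one, Matrix.head_cons,
      PiLp.inner_apply, RCLike.inner_apply, conj_trivial, Fin.sum_univ_two, hsin, hcos,
      Fin.isValue, Fin.zero_eta, Fin.mk_one, RCLike.ofReal_real_eq_id, id_eq]
    have hne : ((N:ℝ) - 1) ≠ 0 := by linarith
    have hne2 : Real.sqrt ((N:ℝ) - 1) ≠ 0 := ne_of_gt hspos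
    have hne3 : Real.sqrt (N:ℝ) ≠ 0 := ne_of_gt hrpos
    have hne4 : (N:ℝ) - 1 + 1 ≠ 0 := by linarith
    field_simp
    rw [hr2]
    have hs2' : Real.sqrt (-1 + (N:ℝ)) ^ 2 = -1 + (N:ℝ) := Real.sq_sqrt (by linarith)
    first
    | linear_combination (-2 * (N:ℝ) * (x.ofLp 0 * Real.sqrt ((N:ℝ)-1) - x.ofLp 1)) * hs2
    | linear_combination (-2 * (N:ℝ) * (x.ofLp 0 * Real.sqrt ((N:ℝ)-1) + x.ofLp 1 * (Real.sqrt ((N:ℝ)-1)^2 - 1))) * hs2
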